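/- arXiv:2111.05828 — 3 statements merged into one kernel-verified Lean document; each statement's English description precedes it below -/
import Mathlib

section
/- Let u : ℝ → ℂ be a C² solution of i c u' + u'' + u·V = 0 on ℝ, where c ∈ ℝ and V : ℝ → ℝ is continuous. Writing u = u₁ + i u₂, the function u₁u₂' − u₂u₁' − (c/2)(1−|u|²) has zero derivative on ℝ; consequently, if u₁u₂' − u₂u₁' − (c/2)(1−|u|²) tends to 0 at +∞, then (c/2)(1−|u|²) = u₁u₂' − u₂u₁' = −⟨i u', u⟩ everywhere on ℝ. -/
/-- If `u : ℝ → ℂ` is a C² solution of `i c u' + u'' + u V = 0` with `V`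
real continuous, then writing `u = u₁ + i u₂`, the function
`u₁u₂' − u₂u₁' − (c/2)(1−|u|²)` has zero derivative on `ℝ`; consequently, if it tends
to `0` at `+∞`, then `(c/2)(1−|u|²) = u₁u₂' − u₂u₁' = −⟨i u', u⟩` everywhere. -/
theorem stmt2 (c : ℝ) (V : ℝ → ℝ) (hV : Continuous V) (u : ℝ → ℂ)
    (hu : ContDiff ℝ 2 u)
    (heq : ∀ x : ℝ,
      Complex.I * (c : ℂ) * deriv u x + deriv (deriv u) x + u x * (V x : ℂ) = 0) :
    (∀ x : ℝ, deriv (fun y : ℝ =>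
        (u y).re * deriv (fun z : ℝ => (u z).im) y
          - (u y).im * deriv (fun z : ℝ => (u z).re) y
          - c / 2 * (1 - (‖u y‖) ^ 2)) x = 0) ∧
    (Filter.Tendsto (fun y : ℝ =>
        (u y).re * deriv (fun z : ℝ => (u z).im) y
          - (u y).im * deriv (fun z : ℝ => (u z).re) y
          - c / 2 * (1 - (‖u y‖) ^ 2)) Filter.atTop (nhds 0) →
      ∀ x : ℝ,
        c / 2 * (1 - (‖u x‖) ^ 2) =
          (u x).re * deriv (fun z : ℝ => (u z).im) x
            - (u x).im * deriv (fun z : ℝ => (u z).re) x ∧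
        c / 2 * (1 - (‖u x‖) ^ 2) =
          -(Complex.I * deriv u x * (starRingEnd ℂ) (u x)).re) := by
  have hdiff : Differentiable ℝ u := hu.differentiable (by norm_num)
  have hu2 : ContDiff ℝ ((1 : WithTop ℕ∞) + 1) u := by
    convert hu using 2
    exact one_add_one_eq_two
  have hdiff' : Differentiable ℝ (deriv u) :=
    ((contDiff_succ_iff_deriv.mp hu2).2.2).differentiable one_ne_zero
  -- derivatives of real and imaginary parts
  have hre : ∀ x, HasDerivAt (fun y : ℝ => (u y).re) ((deriv u x).re) x := fun x =>
    (Complex.reCLM.hasFDerivAt.comp_hasDerivAt x (hdiff x).hasDerivAt)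
  have him : ∀ x, HasDerivAt (fun y : ℝ => (u y).im) ((deriv u x).im) x := fun x =>
    (Complex.imCLM.hasFDerivAt.comp_hasDerivAt x (hdiff x).hasDerivAt)
  have hre' : ∀ x, HasDerivAt (fun y : ℝ => (deriv u y).re) ((deriv (deriv u) x).re) x :=
    fun x => (Complex.reCLM.hasFDerivAt.comp_hasDerivAt x (hdiff' x).hasDerivAt)
  have him' : ∀ x, HasDerivAt (fun y : ℝ => (deriv u y).im) ((deriv (deriv u) x).im) x :=
    fun x => (Complex.imCLM.hasFDerivAt.comp_hasDerivAt x (hdiff' x).hasDerivAt)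
  have hdre : deriv (fun z : ℝ => (u z).re) = fun y => (deriv u y).re :=
    funext fun x => (hre x).deriv
  have hdim : deriv (fun z : ℝ => (u z).im) = fun y => (deriv u y).im :=
    funext fun x => (him x).deriv
  have habs : ∀ y : ℝ, (‖u y‖) ^ 2 = (u y).re ^ 2 + (u y).im ^ 2 := by
    intro y
    rw [Complex.sq_norm, Complex.normSq_apply]
    ring
  -- nice form of the function
  have hg : (fun y : ℝ =>
        (u y).re * deriv (fun z : ℝ => (u z).im) y
          - (u y).im * deriv (fun z : ℝ => (u z).re) y
          - c / 2 * (1 - (‖u y‖) ^ 2))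
      = (fun y : ℝ =>
        (u y).re * (deriv u y).im - (u y).im * (deriv u y).re
          - c / 2 * (1 - ((u y).re ^ 2 + (u y).im ^ 2))) := by
    funext y
    rw [hdre, hdim, habs]
  -- the key derivative computation
  have key : ∀ x, HasDerivAt (fun y : ℝ =>
      (u y).re * (deriv u y).im - (u y).im * (deriv u y).re
        - c / 2 * (1 - ((u y).re ^ 2 + (u y).im ^ 2))) 0 x := by
    intro x
    have h1 : HasDerivAt (fun y =>
        (u y).re * (deriv u y).im - (u y).im * (deriv u y).re
          - c / 2 * (1 - ((u y).re ^ 2 + (u y).im ^ 2)))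
        (((deriv u x).re * (deriv u x).im + (u x).re * (deriv (deriv u) x).im)
          - ((deriv u x).im * (deriv u x).re + (u x).im * (deriv (deriv u) x).re)
          - c / 2 * (0 - (2 * (u x).re * (deriv u x).re + 2 * (u x).im * (deriv u x).im))) x := by
      apply HasDerivAt.sub
      · exact HasDerivAt.sub ((hre x).mul (him' x)) ((him x).mul (hre' x))
      · have h3 : HasDerivAt (fun y : ℝ => 1 - ((u y).re ^ 2 + (u y).im ^ 2))
            (0 - (2 * (u x).re * (deriv u x).re + 2 * (u x).im * (deriv u x).im)) x := by
          apply (hasDerivAt_const x (1:ℝ)).sub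
          have a1 := ((hre x).fun_pow 2)
          have a2 := ((him x).fun_pow 2)
          have a3 := a1.fun_add a2
          convert a3 using 1
          ring
        exact h3.const_mul (c / 2)
    have hde : deriv (deriv u) x = -(Complex.I * (c : ℂ) * deriv u x) - u x * (V x : ℂ) := by
      have h := heq x; linear_combination h
    have hre2 : (deriv (deriv u) x).re = c * (deriv u x).im - (u x).re * V x := by
      rw [hde]
      simp only [Complex.sub_re, Complex.neg_re, Complex.mul_re, Complex.mul_im,
        Complex.I_re, Complex.I_im, Complex.ofReal_re, Complex.ofReal_im]
      ring
    have him2 : (deriv (deriv u) x).im = -(c * (deriv u x).re) - (u x).im * V x := by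
      rw [hde]
      simp only [Complex.sub_im, Complex.neg_im, Complex.mul_re, Complex.mul_im,
        Complex.I_re, Complex.I_im, Complex.ofReal_re, Complex.ofReal_im]
      ring
    convert h1 using 1
    rw [hre2, him2]
    ring
  constructor
  · intro x
    rw [hg]
    exact (key x).deriv
  · intro hlim x
    rw [hg] at hlim
    have hconst : ∀ y, (fun y : ℝ =>
        (u y).re * (deriv u y).im - (u y).im * (deriv u y).re
          - c / 2 * (1 - ((u y).re ^ 2 + (u y).im ^ 2))) y
        = (fun y : ℝ =>
        (u y).re * (deriv u y).im - (u y).im * (deriv u y).re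
          - c / 2 * (1 - ((u y).re ^ 2 + (u y).im ^ 2))) x :=
      fun y => is_const_of_deriv_eq_zero (fun z => (key z).differentiableAt)
        (fun z => (key z).deriv) y x
    have hlim2 : Filter.Tendsto (fun _ : ℝ => (u x).re * (deriv u x).im
        - (u x).im * (deriv u x).re
        - c / 2 * (1 - ((u x).re ^ 2 + (u x).im ^ 2))) Filter.atTop (nhds 0) := by
      refine hlim.congr fun y => ?_
      exact hconst y
    have hfx : (u x).re * (deriv u x).im - (u x).im * (deriv u x).re
        - c / 2 * (1 - ((u x).re ^ 2 + (u x).im ^ 2)) = 0 :=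
      tendsto_nhds_unique tendsto_const_nhds hlim2
    have h2 : -(Complex.I * deriv u x * (starRingEnd ℂ) (u x)).re
        = (u x).re * (deriv u x).im - (u x).im * (deriv u x).re := by
      simp only [Complex.mul_re, Complex.mul_im, Complex.I_re, Complex.I_im,
        Complex.conj_re, Complex.conj_im]
      ring
    constructor
    · rw [hdre, hdim, habs]
      linarith
    · rw [habs, h2]
      linarith
end

section
/- Let c ∈ ℝ, let V : ℝ → ℝ be continuous, and let u : ℝ → ℂ be a C² solution of i c u' + u'' + u·V = 0 on ℝ. Set η = 1 − |u|² and K = |u'|². Assume η, η', K, V all tend to 0 at +∞ and that (c/2)η = −⟨i u', u⟩ on ℝ. Then c²η² + (η')² = 4K(1−η) on ℝ. -/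
/-- Let `u` be a C² solution of `i c u' + u'' + u V = 0` on `ℝ` (`V` real
continuous), `η = 1 − |u|²`, `K = |u'|²`. If `η, η', K, V` all tend to `0` at `+∞` and
`(c/2)η = −⟨i u', u⟩` on `ℝ`, then `c²η² + (η')² = 4K(1−η)` on `ℝ`. -/
theorem stmt4 (c : ℝ) (V : ℝ → ℝ) (hV : Continuous V) (u : ℝ → ℂ)
    (hu : ContDiff ℝ 2 u)
    (heq : ∀ x : ℝ,
      Complex.I * (c : ℂ) * deriv u x + deriv (deriv u) x + u x * (V x : ℂ) = 0)
    (η K : ℝ → ℝ)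
    (hη : ∀ x : ℝ, η x = 1 - ‖u x‖ ^ 2)
    (hK : ∀ x : ℝ, K x = ‖deriv u x‖ ^ 2)
    (h1 : Filter.Tendsto η Filter.atTop (nhds 0))
    (h2 : Filter.Tendsto (deriv η) Filter.atTop (nhds 0))
    (h3 : Filter.Tendsto K Filter.atTop (nhds 0))
    (h4 : Filter.Tendsto V Filter.atTop (nhds 0))
    (h5 : ∀ x : ℝ, c / 2 * η x = -(Complex.I * deriv u x * (starRingEnd ℂ) (u x)).re) :
    ∀ x : ℝ, c ^ 2 * η x ^ 2 + (deriv η x) ^ 2 = 4 * K x * (1 - η x) := by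
  intro x
  have hud : DifferentiableAt ℝ u x :=
    (hu.differentiable (by norm_num)).differentiableAt
  have hu' : HasDerivAt u (deriv u x) x := hud.hasDerivAt
  have ha : HasDerivAt (fun y => (u y).re) (deriv u x).re x :=
    Complex.reCLM.hasFDerivAt.comp_hasDerivAt x hu'
  have hb : HasDerivAt (fun y => (u y).im) (deriv u x).im x :=
    Complex.imCLM.hasFDerivAt.comp_hasDerivAt x hu'
  set a := (u x).re
  set b := (u x).im
  set a' := (deriv u x).re
  set b' := (deriv u x).im
  have hηfun : η = fun y => 1 - ((u y).re ^ 2 + (u y).im ^ 2) := by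
    funext y
    rw [hη y, Complex.sq_norm, Complex.normSq_apply]
    ring
  have hd : deriv η x = -(2 * a * a' + 2 * b * b') := by
    have hD : HasDerivAt η (0 - (2 * a ^ 1 * a' + 2 * b ^ 1 * b')) x := by
      rw [hηfun]
      exact (hasDerivAt_const x (1 : ℝ)).sub ((ha.pow 2).add (hb.pow 2))
    rw [hD.deriv]; ring
  have hc : c * η x = 2 * (b' * a - a' * b) := by
    have := h5 x
    simp only [Complex.mul_re, Complex.mul_im, Complex.I_re, Complex.I_im,
      Complex.conj_re, Complex.conj_im] at this
    linarith [this]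
  have hηx : η x = 1 - (a ^ 2 + b ^ 2) := by
    rw [hη x, Complex.sq_norm, Complex.normSq_apply]; ring
  have hKx : K x = a' ^ 2 + b' ^ 2 := by
    rw [hK x, Complex.sq_norm, Complex.normSq_apply]; ring
  rw [hd, hKx]
  rw [hηx] at hc ⊢
  linear_combination (c * (1 - (a ^ 2 + b ^ 2)) + 2 * (b' * a - a' * b)) * hc
end

section
/- Let c > 0 and let u be a C² solution of the traveling wave equation i c u' + u'' + u·V = 0 (V continuous real) such that the identity c²η² + (η')² = 4K(1−η) holds on ℝ, where η = 1 − |u|², K = |u'|². If η ≤ 1 on ℝ, then η < 1 on ℝ, i.e. u never vanishes. -/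
/-- Let `c > 0` and `u` a C² solution of `i c u' + u'' + u V = 0` (`V`
continuous real) such that `c²η² + (η')² = 4K(1−η)` holds on `ℝ`, where `η = 1 − |u|²`
and `K = |u'|²`. If `η ≤ 1` on `ℝ`, then `η < 1` on `ℝ`, i.e. `u` never vanishes. -/
theorem stmt5 (c : ℝ) (hc : 0 < c) (V : ℝ → ℝ) (hV : Continuous V) (u : ℝ → ℂ)
    (hu : ContDiff ℝ 2 u)
    (heq : ∀ x : ℝ,
      Complex.I * (c : ℂ) * deriv u x + deriv (deriv u) x + u x * (V x : ℂ) = 0)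
    (η K : ℝ → ℝ)
    (hη : ∀ x : ℝ, η x = 1 - (‖u x‖) ^ 2)
    (hK : ∀ x : ℝ, K x = (‖deriv u x‖) ^ 2)
    (hid : ∀ x : ℝ, c ^ 2 * η x ^ 2 + (deriv η x) ^ 2 = 4 * K x * (1 - η x))
    (hle : ∀ x : ℝ, η x ≤ 1) :
    (∀ x : ℝ, η x < 1) ∧ ∀ x : ℝ, u x ≠ 0 := by
  have hlt : ∀ x : ℝ, η x < 1 := by
    intro x
    rcases lt_or_eq_of_le (hle x) with h | h
    · exact h
    · exfalso
      have hmax : IsLocalMax η x := by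
        apply IsMaxOn.isLocalMax (s := Set.univ)
        · intro y _
          simp only [Set.mem_setOf_eq]
          rw [h]; exact hle y
        · exact Filter.univ_mem
      have hd0 : deriv η x = 0 := hmax.deriv_eq_zero
      have := hid x
      rw [h, hd0] at this
      simp at this
      nlinarith
  refine ⟨hlt, fun x hx => ?_⟩
  have := hlt x
  rw [hη x, hx] at this
  simp at this
end
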